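/- For every dimension d ≥ 1 there exists a constant C > 0 (depending only on d) such that for every real ε with 0 < ε ≤ 1/2, every real ρ > 0, every point q in Euclidean space ℝ^d, and every finite family of closed balls closedBall(c i, ρ) of common radius ρ (indexed by a finite type L) each of which contains q, there exists a subset L' ⊆ L with |L'| ≤ C · ε^{-d} such that for every i ∈ L there exists m ∈ L' with closedBall(c i, ρ) ⊆ closedBall(c m, (1+ε)·ρ). -/

import Mathlib

open Metric MeasureTheory Finset
open scoped ENNReal

/-- for every dimension `d ≥ 1` there is a constant `C > 0` (depending only on
`d`) such that for every `0 < ε ≤ 1/2`, every radius `ρ > 0`, every point `q` in `ℝ^d`, and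
every finite family of closed balls of common radius `ρ` each containing `q`, there is a
subfamily of at most `C · ε⁻ᵈ` balls such that every ball of the family is contained in a
`(1+ε)`-expansion of some ball of the subfamily. -/
theorem euclidean_equal_radius_ball_family_selection (d : ℕ) (hd : 1 ≤ d) :
    ∃ C : ℝ, 0 < C ∧
      ∀ (ε : ℝ), 0 < ε → ε ≤ 1/2 →
      ∀ (ρ : ℝ), 0 < ρ →
      ∀ (q : EuclideanSpace ℝ (Fin d)),
      ∀ (L : Type) [Fintype L],
      ∀ (c : L → EuclideanSpace ℝ (Fin d)),
      (∀ i, q ∈ Metric.closedBall (c i) ρ) →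
      ∃ L' : Finset L,
        (L'.card : ℝ) ≤ C * ε ^ (-(d : ℤ)) ∧
        ∀ i : L, ∃ m ∈ L',
          Metric.closedBall (c i) ρ ⊆ Metric.closedBall (c m) ((1 + ε) * ρ) := by
  classical
  refine ⟨4 ^ d, by positivity, ?_⟩
  intro ε hε hε2 ρ hρ q L _ c hq
  set δ : ℝ := ε * ρ with hδdef
  have hδ : 0 < δ := mul_pos hε hρ
  -- maximal δ-separated subfamily
  let P : Finset L → Prop := fun S => ∀ i ∈ S, ∀ j ∈ S, i ≠ j → δ ≤ dist (c i) (c j)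
  obtain ⟨S, hS, hSmax⟩ := Finset.exists_max_image
    ((Finset.univ.powerset).filter P) Finset.card
    ⟨∅, by simp [P]⟩
  have hPS : P S := (Finset.mem_filter.1 hS).2
  -- every center is δ-close to some selected center
  have hnet : ∀ i : L, ∃ m ∈ S, dist (c i) (c m) ≤ δ := by
    intro i
    by_contra h
    push_neg at h
    have hiS : i ∉ S := by
      intro hiS
      have := h i hiS
      simp [dist_self] at this
      linarith
    have hins : P (insert i S) := by
      intro a ha b hb hab
      rcases Finset.mem_insert.1 ha with ha' | ha' <;>
        rcases Finset.mem_insert.1 hb with hb' | hb'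
      · exact absurd (ha'.trans hb'.symm) hab
      · rw [ha']; exact (h b hb').le
      · rw [hb', dist_comm]; exact (h a ha').le
      · exact hPS a ha' b hb' hab
    have hmem : insert i S ∈ (Finset.univ.powerset).filter P := by
      simp only [Finset.mem_filter, Finset.mem_powerset]
      exact ⟨Finset.subset_univ _, hins⟩
    have := hSmax _ hmem
    rw [Finset.card_insert_of_notMem hiS] at this
    omega
  refine ⟨S, ?_, ?_⟩
  · -- cardinality bound via packing
    haveI : Nontrivial (EuclideanSpace ℝ (Fin d)) := by
      apply Module.nontrivial_of_finrank_pos (R := ℝ)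
      rw [finrank_euclideanSpace_fin]
      omega
    set μ : Measure (EuclideanSpace ℝ (Fin d)) := volume with hμ
    set B1 := μ (Metric.ball (0 : EuclideanSpace ℝ (Fin d)) 1) with hB1
    have hB1pos : B1 ≠ 0 := (measure_ball_pos μ 0 one_pos).ne'
    have hB1top : B1 ≠ ⊤ := (measure_ball_lt_top).ne
    have hr : (0:ℝ) ≤ δ / 2 := by positivity
    have hdisj : (S : Set L).PairwiseDisjoint
        (fun m => Metric.ball (c m) (δ / 2)) := by
      intro a ha b hb hab
      apply Metric.ball_disjoint_ball
      have := hPS a ha b hb hab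
      linarith
    have hmeas : μ (⋃ m ∈ S, Metric.ball (c m) (δ / 2))
        = ∑ m ∈ S, μ (Metric.ball (c m) (δ / 2)) :=
      measure_biUnion_finset hdisj fun m _ => measurableSet_ball
    have hballvol : ∀ m : L, μ (Metric.ball (c m) (δ / 2))
        = ENNReal.ofReal ((δ / 2) ^ d) * B1 := by
      intro m
      rw [hB1, Measure.addHaar_ball μ (c m) hr, finrank_euclideanSpace_fin]
    have hsubset : (⋃ m ∈ S, Metric.ball (c m) (δ / 2))
        ⊆ Metric.closedBall q (2 * ρ) := by
      intro x hx
      simp only [Set.mem_iUnion] at hx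
      obtain ⟨m, hm, hx⟩ := hx
      have h1 : dist x (c m) < δ / 2 := hx
      have h2 : dist (c m) q ≤ ρ := by
        have := hq m
        rw [Metric.mem_closedBall, dist_comm] at this
        exact this
      have hδρ : δ ≤ ρ / 2 := by
        rw [hδdef]; nlinarith
      rw [Metric.mem_closedBall]
      calc dist x q ≤ dist x (c m) + dist (c m) q := dist_triangle _ _ _
        _ ≤ δ / 2 + ρ := by linarith
        _ ≤ 2 * ρ := by linarith
    have hcbvol : μ (Metric.closedBall q (2 * ρ))
        = ENNReal.ofReal ((2 * ρ) ^ d) * B1 := by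
      rw [hB1, Measure.addHaar_closedBall μ q (by linarith), finrank_euclideanSpace_fin]
    have hkey : (S.card : ℝ≥0∞) * ENNReal.ofReal ((δ / 2) ^ d) * B1
        ≤ ENNReal.ofReal ((2 * ρ) ^ d) * B1 := by
      calc (S.card : ℝ≥0∞) * ENNReal.ofReal ((δ / 2) ^ d) * B1
          = ∑ m ∈ S, μ (Metric.ball (c m) (δ / 2)) := by
            rw [Finset.sum_congr rfl fun m _ => hballvol m, Finset.sum_const,
              nsmul_eq_mul, mul_assoc]
        _ = μ (⋃ m ∈ S, Metric.ball (c m) (δ / 2)) := hmeas.symm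
        _ ≤ μ (Metric.closedBall q (2 * ρ)) := measure_mono hsubset
        _ = ENNReal.ofReal ((2 * ρ) ^ d) * B1 := hcbvol
    have hkey2 : (S.card : ℝ≥0∞) * ENNReal.ofReal ((δ / 2) ^ d)
        ≤ ENNReal.ofReal ((2 * ρ) ^ d) :=
      (ENNReal.mul_le_mul_iff_left hB1pos hB1top).1 hkey
    have hreal : (S.card : ℝ) * (δ / 2) ^ d ≤ (2 * ρ) ^ d := by
      have h' : ENNReal.ofReal ((S.card : ℝ) * (δ / 2) ^ d)
          ≤ ENNReal.ofReal ((2 * ρ) ^ d) := by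
        rw [ENNReal.ofReal_mul (by positivity), ENNReal.ofReal_natCast]
        exact hkey2
      exact (ENNReal.ofReal_le_ofReal_iff (by positivity)).1 h'
    have hrw : (4:ℝ) ^ d * ε ^ (-(d : ℤ)) * (δ / 2) ^ d = (2 * ρ) ^ d := by
      rw [zpow_neg, zpow_natCast, ← inv_pow, ← mul_pow, ← mul_pow]
      congr 1
      rw [hδdef]
      field_simp
      ring
    have hpow : (0:ℝ) < (δ / 2) ^ d := by positivity
    exact (mul_le_mul_iff_of_pos_right hpow).1 (hreal.trans_eq hrw.symm)
  · -- covering property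
    intro i
    obtain ⟨m, hm, hdist⟩ := hnet i
    refine ⟨m, hm, Metric.closedBall_subset_closedBall' ?_⟩
    have h3 : dist (c i) (c m) ≤ ε * ρ := hdist
    nlinarith
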